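/- (Covariance upper bound, Lemma 3.1, part 1.) Let ε > 0, ω_min > 0, C ≥ 0 and, for k = 1,…,n, let q_k ≥ q_min > 0 be constants. Let p₁,…,p_n : [0,∞) → ℝ be differentiable functions satisfying, for every k and every t ≥ 0, p_k'(t) ≤ −(ω_min q_k/ε)·p_k(t)² + 2C·p_k(t) + 2. Define λ_max := √( (2εC/(ω_min q_min))² + 8ε/(ω_min q_min) ). Then (i) max_k p_k(t) ≤ max{ max_k p_k(0), λ_max } for all t ≥ 0, and (ii) max_k p_k(t) ≤ 2·λ_max for all t ≥ ε/(ω_min q_min λ_max). -/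

import Mathlib

private lemma stay_below {g : ℝ → ℝ} {a b K : ℝ}
    (hg : ∀ t ∈ Set.Icc a b, DifferentiableAt ℝ g t)
    (h0 : g a ≤ K)
    (hd : ∀ t ∈ Set.Ico a b, g t = K → deriv g t < 0) :
    ∀ t ∈ Set.Icc a b, g t ≤ K := by
  intro t ht
  exact image_le_of_deriv_right_lt_deriv_boundary
    (f := g) (f' := deriv g) (B := fun _ => K) (B' := fun _ => 0)
    (fun x hx => (hg x hx).continuousAt.continuousWithinAt)
    (fun x hx => ((hg x (Set.Ico_subset_Icc_self hx)).hasDerivAt).hasDerivWithinAt)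
    h0 (fun x => hasDerivAt_const x K) hd ht


private lemma riccati_burn_in {a L C t : ℝ} (hapos : 0 < a) (hLpos : 0 < L)
    (key2 : ∀ x : ℝ, 2 * L ≤ x → 2 * C * x + 2 < a / 2 * x ^ 2)
    (g : ℝ → ℝ) (htpos : 0 < t)
    (hdiff : ∀ s, 0 ≤ s → DifferentiableAt ℝ g s)
    (hdb : ∀ s, 0 ≤ s → deriv g s ≤ -a * (g s) ^ 2 + 2 * C * g s + 2)
    (hbig : ∀ s ∈ Set.Icc (0:ℝ) t, 2 * L < g s)
    (hat : 1 ≤ a * t * L) : g t ≤ 2 * L := by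
  have hg0 : 2 * L < g 0 := hbig 0 ⟨le_refl 0, htpos.le⟩
  have hg0pos : 0 < g 0 := lt_trans (by positivity) hg0
  set c := 2 / (a * g 0) with hc
  have hcpos : 0 < c := by positivity
  have hBd : ∀ u : ℝ, 0 ≤ u →
      HasDerivAt (fun u : ℝ => 2 / (a * (u + c))) (-(2 * a) / (a * (u + c)) ^ 2) u := by
    intro u hu
    have hne : a * (u + c) ≠ 0 := (mul_pos hapos (by linarith)).ne'
    have h1 : HasDerivAt (fun y : ℝ => a * (y + c)) a u := by
      simpa using ((hasDerivAt_id u).add_const c).const_mul a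
    have h2 := (hasDerivAt_const u (2 : ℝ)).div h1 hne
    have h3 := h2
    simp only [zero_mul, zero_sub] at h3
    exact h3
  have hmain : g t ≤ 2 / (a * (t + c)) := by
    refine image_le_of_deriv_right_lt_deriv_boundary'
      (f := g) (f' := deriv g) (a := 0) (b := t)
      (B := fun u => 2 / (a * (u + c))) (B' := fun u => -(2 * a) / (a * (u + c)) ^ 2)
      (fun x hx => (hdiff x hx.1).continuousAt.continuousWithinAt)
      (fun x hx => ((hdiff x hx.1).hasDerivAt).hasDerivWithinAt)
      ?_ ?_ ?_ ?_ ⟨htpos.le, le_refl t⟩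
    · -- g 0 ≤ B 0
      have hBz : 2 / (a * (0 + c)) = g 0 := by
        rw [hc]
        field_simp
        ring
      simp only [hBz]
      exact le_refl _
    · exact fun x hx => ((hBd x hx.1).continuousAt).continuousWithinAt
    · exact fun x hx => (hBd x hx.1).hasDerivWithinAt
    · intro x hx hcon
      have hgx : 2 * L < g x := hbig x ⟨hx.1, hx.2.le⟩
      have h1 := hdb x hx.1
      have h2 := key2 (g x) hgx.le
      have hne : (0:ℝ) < a * (x + c) := mul_pos hapos (by linarith [hx.1])
      have hBx : (a * (x + c)) * g x = 2 := by
        rw [hcon]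
        field_simp
        exact div_self (ne_of_gt (by linarith [hx.1]))
      have heq : -(2 * a) / (a * (x + c)) ^ 2 = -(a / 2) * (g x) ^ 2 := by
        rw [div_eq_iff (pow_ne_zero 2 hne.ne')]
        linear_combination (a / 2) * ((a * (x + c)) * g x + 2) * hBx
      show deriv g x < -(2 * a) / (a * (x + c)) ^ 2
      rw [heq]
      linarith
  have hfin : 2 / (a * (t + c)) ≤ 2 * L := by
    have htc : (0:ℝ) < a * (t + c) := mul_pos hapos (by linarith)
    rw [div_le_iff₀ htc]
    nlinarith [mul_pos (mul_pos hLpos hapos) hcpos]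
  linarith

theorem covariance_upper_bound
    {n : ℕ} (hn : 0 < n) (ε ωmin C qmin : ℝ)
    (hε : 0 < ε) (hω : 0 < ωmin) (hC : 0 ≤ C) (hqmin : 0 < qmin)
    (q : Fin n → ℝ) (hq : ∀ k, qmin ≤ q k)
    (p : Fin n → ℝ → ℝ)
    (hdiff : ∀ k, ∀ t, 0 ≤ t → DifferentiableAt ℝ (p k) t)
    (hineq : ∀ k, ∀ t, 0 ≤ t →
      deriv (p k) t ≤ -(ωmin * q k / ε) * (p k t) ^ 2 + 2 * C * p k t + 2) :
    (∀ t, 0 ≤ t → ∀ k, p k t ≤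
        max (Finset.univ.sup' ⟨⟨0, hn⟩, Finset.mem_univ _⟩ fun j => p j 0)
          (Real.sqrt ((2 * ε * C / (ωmin * qmin)) ^ 2 + 8 * ε / (ωmin * qmin)))) ∧
    (∀ t, ε / (ωmin * qmin *
        Real.sqrt ((2 * ε * C / (ωmin * qmin)) ^ 2 + 8 * ε / (ωmin * qmin))) ≤ t →
      ∀ k, p k t ≤
        2 * Real.sqrt ((2 * ε * C / (ωmin * qmin)) ^ 2 + 8 * ε / (ωmin * qmin))) := by
  have hwpos : 0 < ωmin * qmin := mul_pos hω hqmin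
  set w := ωmin * qmin with hw
  set a := w / ε with ha
  have hapos : 0 < a := div_pos hwpos hε
  have hEpos : 0 < (2 * ε * C / w) ^ 2 + 8 * ε / w := by positivity
  set L := Real.sqrt ((2 * ε * C / w) ^ 2 + 8 * ε / w) with hL
  have hLpos : 0 < L := Real.sqrt_pos.2 hEpos
  have hLsq : L ^ 2 = (2 * ε * C / w) ^ 2 + 8 * ε / w := Real.sq_sqrt hEpos.le
  have haL : a ^ 2 * L ^ 2 = 4 * C ^ 2 + 8 * a := by
    rw [hLsq, ha]; field_simp; ring
  have haL2C : 2 * C < a * L := by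
    nlinarith [mul_pos hapos hLpos, hC]
  have key1 : ∀ x : ℝ, L ≤ x → 2 * C * x + 2 < a * x ^ 2 := by
    intro x hx
    nlinarith [sq_nonneg (a * L - 2 * C), mul_pos hapos hLpos,
      mul_nonneg (sub_nonneg.2 hx) hapos.le,
      mul_nonneg (mul_nonneg (sub_nonneg.2 hx) hapos.le) (sub_nonneg.2 hx),
      mul_nonneg (mul_nonneg (sub_nonneg.2 hx) hapos.le) hLpos.le,
      mul_nonneg (mul_nonneg (sub_nonneg.2 hx) hapos.le) (sub_pos.2 haL2C).le]
  have key2 : ∀ x : ℝ, 2 * L ≤ x → 2 * C * x + 2 < a / 2 * x ^ 2 := by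
    intro x hx
    have hxL : L ≤ x := by linarith
    nlinarith [sq_nonneg (a * L - 2 * C), mul_pos hapos hLpos,
      mul_nonneg (sub_nonneg.2 hx) hapos.le,
      mul_nonneg (mul_nonneg (sub_nonneg.2 hx) hapos.le) (sub_nonneg.2 hx),
      mul_nonneg (mul_nonneg (sub_nonneg.2 hx) hapos.le) hLpos.le,
      mul_nonneg (mul_nonneg (sub_nonneg.2 hx) hapos.le) (sub_pos.2 haL2C).le]
  -- per-component derivative bound
  have hdb : ∀ k, ∀ t, 0 ≤ t →
      deriv (p k) t ≤ -a * (p k t) ^ 2 + 2 * C * p k t + 2 := by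
    intro k t ht
    have h1 := hineq k t ht
    have h2 : a ≤ ωmin * q k / ε := by
      rw [ha, hw]
      gcongr
      exact hq k
    have h3 : -(ωmin * q k / ε) * (p k t) ^ 2 ≤ -a * (p k t) ^ 2 := by
      have := sq_nonneg (p k t)
      nlinarith
    linarith
  have hderiv_lt : ∀ k, ∀ t, 0 ≤ t → L ≤ p k t → deriv (p k) t < 0 := by
    intro k t ht hpt
    have := hdb k t ht
    have := key1 (p k t) hpt
    linarith
  constructor
  · -- part (i)
    intro t ht k
    set M := max (Finset.univ.sup' ⟨⟨0, hn⟩, Finset.mem_univ _⟩ fun j => p j 0) L with hM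
    have hML : L ≤ M := le_max_right _ _
    have h0 : p k 0 ≤ M :=
      le_trans (Finset.le_sup' (fun j => p j 0) (Finset.mem_univ k)) (le_max_left _ _)
    exact stay_below
      (fun s hs => hdiff k s hs.1) h0
      (fun s hs hcon => hderiv_lt k s hs.1 (hcon ▸ hML)) t ⟨ht, le_refl t⟩
  · -- part (ii)
    intro t ht k
    have hTpos : 0 < ε / (w * L) := by positivity
    have htpos : 0 < t := lt_of_lt_of_le hTpos ht
    by_cases hcase : ∃ s ∈ Set.Icc (0:ℝ) t, p k s ≤ 2 * L
    · obtain ⟨s, hs, hps⟩ := hcase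
      exact stay_below (a := s) (b := t) (K := 2 * L)
        (fun u hu => hdiff k u (le_trans hs.1 hu.1)) hps
        (fun u hu hcon => hderiv_lt k u (le_trans hs.1 hu.1)
          (by rw [hcon]; linarith)) t ⟨hs.2, le_refl t⟩
    · push_neg at hcase
      have hat2 : 1 ≤ a * t * L := by
        have h1 : ε ≤ t * (w * L) := (div_le_iff₀ (mul_pos hwpos hLpos)).1 ht
        rw [ha, div_mul_eq_mul_div, div_mul_eq_mul_div, one_le_div hε]
        linarith [h1]
      exact riccati_burn_in hapos hLpos key2 (p k) htpos
        (fun s hs => hdiff k s hs)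
        (fun s hs => hdb k s hs) hcase hat2
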